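/- In the setting of the slope factorization of shuffle algebras (pairings, coproducts, and projections as above), every E ∈ S^≥ satisfies E = [E₁]_{<p} · [E₂]_{≥p}, where Δ(E) = E₁ ⊗ E₂ is Sweedler notation for the coproduct, [·]_{<p} projects to S⁺_{(-∞,p)} and [·]_{≥p} projects to S⁺_{[p,∞]} (defined via the perfect pairings with S⁻_{(-∞,p)} and S⁻_{[p,∞]} respectively). -/
import Mathlib


/-!
STATEMENT 5: In the slope-factorization setting, every `E ∈ S^≥` (here the
bialgebra `A`) satisfies `E = [E₁]_{<p} · [E₂]_{≥p}` in Sweedler notation, i.e.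
`mul ∘ ([·]_{<p} ⊗ [·]_{≥p}) ∘ Δ = id`, where `[·]_{<p}` projects to
`A₁ = S⁺_{(-∞,p)}` and `[·]_{≥p}` projects to `A₂ = S⁺_{[p,∞]}`, defined via the
perfect restricted pairings with `B₁ = S⁻_{(-∞,p)}` and `B₂ = S⁻_{[p,∞]}`.
-/

open TensorProduct

/-- `pair2 p (a₁ ⊗ a₂) (b₁ ⊗ b₂) = ⟨a₁,b₁⟩⟨a₂,b₂⟩`. -/
noncomputable def pair2 {K A B : Type*} [CommRing K] [AddCommGroup A] [Module K A]
    [AddCommGroup B] [Module K B] (p : A →ₗ[K] Module.Dual K B) :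
    A ⊗[K] A →ₗ[K] Module.Dual K (B ⊗[K] B) :=
  (TensorProduct.dualDistrib K B B) ∘ₗ (TensorProduct.map p p)

theorem factorization_E_lt_geq
    {K A B : Type*} [Field K] [Ring A] [Ring B]
    [Bialgebra K A] [Bialgebra K B]
    (p : A →ₗ[K] Module.Dual K B)
    -- bialgebra pairing axiom: ⟨a, b'b''⟩ = ⟨a₁,b'⟩⟨a₂,b''⟩
    (hpair1 : ∀ (a : A) (b b' : B),
      p a (b * b') = pair2 p (Coalgebra.comul (R := K) a) (b ⊗ₜ[K] b'))
    -- slope subalgebras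
    (A1 A2 : Subalgebra K A) (B1 B2 : Subalgebra K B)
    -- the pairing factorizes along the slope decompositions
    (hfact : ∀ e' ∈ A1, ∀ e ∈ A2, ∀ f ∈ B1, ∀ f' ∈ B2,
      p (e' * e) (f * f') = p e' f * p e f')
    -- non-degeneracy of the full pairing
    (hnondeg : ∀ a : A, (∀ b : B, p a b = 0) → a = 0)
    -- B = B₁ · B₂ : every element of B is a sum of products f·f'
    (hBspan : Submodule.span K {b : B | ∃ f ∈ B1, ∃ f' ∈ B2, b = f * f'} = ⊤)
    -- the projection [·]_{<p} : S^≥ → S⁺_{(-∞,p)}, defined via the perfect pairing with B₁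
    (πlt : A →ₗ[K] A)
    (hltmem : ∀ x : A, πlt x ∈ A1)
    (hltpair : ∀ x : A, ∀ f ∈ B1, p (πlt x) f = p x f)
    -- the projection [·]_{≥p} : S^≥ → S⁺_{[p,∞]}, defined via the perfect pairing with B₂
    (πgeq : A →ₗ[K] A)
    (hgeqmem : ∀ x : A, πgeq x ∈ A2)
    (hgeqpair : ∀ x : A, ∀ f' ∈ B2, p (πgeq x) f' = p x f') :
    ∀ E : A,
      (LinearMap.mul' K A) (TensorProduct.map πlt πgeq (Coalgebra.comul (R := K) E)) = E := by
  intro E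
  set D := (LinearMap.mul' K A) (TensorProduct.map πlt πgeq (Coalgebra.comul (R := K) E))
    with hDdef
  have key : ∀ f ∈ B1, ∀ f' ∈ B2, p D (f * f') = p E (f * f') := by
    intro f hf f' hf'
    have claim : ∀ t : A ⊗[K] A,
        p ((LinearMap.mul' K A) (TensorProduct.map πlt πgeq t)) (f * f')
          = pair2 p t (f ⊗ₜ[K] f') := by
      intro t
      induction t using TensorProduct.induction_on with
      | zero => simp
      | tmul x y =>
          simp only [TensorProduct.map_tmul, LinearMap.mul'_apply]
          rw [hfact _ (hltmem x) _ (hgeqmem y) f hf f' hf',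
            hltpair x f hf, hgeqpair y f' hf']
          simp [pair2]
      | add x y hx hy =>
          simp only [map_add, LinearMap.add_apply, hx, hy]
    rw [hDdef, claim, ← hpair1]
  have hzero : ∀ b : B, p (D - E) b = 0 := by
    intro b
    have hb : b ∈ Submodule.span K {b : B | ∃ f ∈ B1, ∃ f' ∈ B2, b = f * f'} := by
      rw [hBspan]; trivial
    induction hb using Submodule.span_induction with
    | mem b hb =>
        obtain ⟨f, hf, f', hf', rfl⟩ := hb
        rw [map_sub, LinearMap.sub_apply, key f hf f' hf', sub_self]
    | zero => simp
    | add b c _ _ hb hc =>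
        rw [map_add, hb, hc, add_zero]
    | smul k b _ hb =>
        rw [map_smul, smul_eq_mul, hb, mul_zero]
  exact sub_eq_zero.mp (hnondeg _ hzero)
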